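/- Let π be uniformly random in S_n with n ≥ T+1, and let C_1, ..., C_T ⊆ [n] be fixed sets of size s each (chosen independently of π). Let E be the event that π^t(1) ∈ C_t for all t = 1,...,T. Then Pr[E] ≤ (s/(n−T))^T + 2T³/n. -/

import Mathlib

open Finset Nat

/-- Lemma A: permutations satisfying `m` constraints on distinct points. -/
lemma perm_constraint_card_le (n m : ℕ) (a b : Fin m → Fin n) (ha : Function.Injective a) :
    ((Finset.univ : Finset (Equiv.Perm (Fin n))).filter
      (fun π => ∀ i, π (a i) = b i)).card ≤ (n - m)! := by
  classical
  set S := (Finset.univ : Finset (Equiv.Perm (Fin n))).filter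
      (fun π => ∀ i, π (a i) = b i) with hS
  rcases S.eq_empty_or_nonempty with h | ⟨π₀, hπ₀⟩
  · simp [h]
  · have hπ₀' : ∀ i, π₀ (a i) = b i := by
      simpa [hS] using hπ₀
    set A : Finset (Fin n) := Finset.univ.image a with hA
    have hAcard : A.card = m := by
      rw [hA, Finset.card_image_of_injective _ ha, Finset.card_univ, Fintype.card_fin]
    have htrans : S.card = (S.image (fun π => π₀⁻¹ * π)).card := by
      rw [Finset.card_image_of_injective _ (mul_right_injective _)]
    have hsub : S.image (fun π => π₀⁻¹ * π) ⊆
        Finset.univ.filter (fun σ : Equiv.Perm (Fin n) => ∀ i, σ (a i) = a i) := by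
      intro σ hσ
      simp only [Finset.mem_image, hS, Finset.mem_filter, Finset.mem_univ, true_and] at hσ ⊢
      obtain ⟨π, hπ, rfl⟩ := hσ
      intro i
      simp [Equiv.Perm.mul_apply, hπ i, ← hπ₀' i]
    have hstab : (Finset.univ.filter
        (fun σ : Equiv.Perm (Fin n) => ∀ i, σ (a i) = a i)).card ≤ (n - m)! := by
      rw [← Fintype.card_subtype]
      have key : ∀ (σ : Equiv.Perm (Fin n)), (∀ i, σ (a i) = a i) →
          ∀ x : Fin n, x ∉ A → σ x ∉ A := by
        intro σ hσ x hx hmem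
        rw [hA, Finset.mem_image] at hmem
        obtain ⟨i, -, hi⟩ := hmem
        rw [← hσ i] at hi
        exact hx (by rw [← σ.injective hi]; exact Finset.mem_image_of_mem a (Finset.mem_univ i))
      let Φ : {σ : Equiv.Perm (Fin n) // ∀ i, σ (a i) = a i} →
          ({x : Fin n // x ∉ A} ↪ {x : Fin n // x ∉ A}) := fun σ =>
        ⟨fun x => ⟨σ.1 x.1, key σ.1 σ.2 x.1 x.2⟩,
          fun x y hxy => Subtype.ext (σ.1.injective (congrArg Subtype.val hxy))⟩
      have hΦ : Function.Injective Φ := by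
        intro σ τ h
        apply Subtype.ext
        apply Equiv.ext
        intro x
        by_cases hx : x ∈ A
        · rw [hA, Finset.mem_image] at hx
          obtain ⟨i, -, rfl⟩ := hx
          rw [σ.2 i, τ.2 i]
        · have h1 : ((Φ σ) ⟨x, hx⟩ : Fin n) = ((Φ τ) ⟨x, hx⟩ : Fin n) := by rw [h]
          exact h1
      calc Fintype.card {σ : Equiv.Perm (Fin n) // ∀ i, σ (a i) = a i}
          ≤ Fintype.card ({x : Fin n // x ∉ A} ↪ {x : Fin n // x ∉ A}) :=
            Fintype.card_le_of_injective Φ hΦ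
        _ = (Fintype.card {x : Fin n // x ∉ A}).descFactorial
              (Fintype.card {x : Fin n // x ∉ A}) := Fintype.card_embedding_eq
        _ = (Fintype.card {x : Fin n // x ∉ A})! := Nat.descFactorial_self _
        _ = (n - m)! := by
            congr 1
            have h2 : Fintype.card {x : Fin n // x ∈ A} = m :=
              (Fintype.card_of_subtype A (fun x => Iff.rfl)).trans hAcard
            rw [Fintype.card_subtype_compl, h2, Fintype.card_fin]
    calc S.card = (S.image (fun π => π₀⁻¹ * π)).card := htrans
      _ ≤ _ := Finset.card_le_card hsub
      _ ≤ (n - m)! := hstab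

/-- Count of injective tuples avoiding a point. -/
lemma card_tuples_le (n m : ℕ) (z : Fin n) :
    ((Finset.univ : Finset (Fin m → Fin n)).filter
      (fun w => Function.Injective w ∧ ∀ i, w i ≠ z)).card ≤ (n - 1).descFactorial m := by
  classical
  rw [← Fintype.card_subtype]
  let Φ : {w : Fin m → Fin n // Function.Injective w ∧ ∀ i, w i ≠ z} →
      (Fin m ↪ {x : Fin n // x ≠ z}) := fun w =>
    ⟨fun i => ⟨w.1 i, w.2.2 i⟩, fun i j h => w.2.1 (congrArg Subtype.val h)⟩
  have hΦ : Function.Injective Φ := by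
    intro v w h
    apply Subtype.ext
    funext i
    have h1 : (Φ v) i = (Φ w) i := by rw [h]
    exact congrArg Subtype.val h1
  calc Fintype.card {w : Fin m → Fin n // Function.Injective w ∧ ∀ i, w i ≠ z}
      ≤ Fintype.card (Fin m ↪ {x : Fin n // x ≠ z}) := Fintype.card_le_of_injective Φ hΦ
    _ = (Fintype.card {x : Fin n // x ≠ z}).descFactorial m := by
        rw [Fintype.card_embedding_eq, Fintype.card_fin]
    _ = (n - 1).descFactorial m := by
        congr 1
        have h2 : Fintype.card {x : Fin n // x = z} = 1 := Fintype.card_subtype_eq z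
        calc Fintype.card {x : Fin n // x ≠ z}
            = Fintype.card (Fin n) - Fintype.card {x : Fin n // x = z} :=
              Fintype.card_subtype_compl _
          _ = n - 1 := by rw [h2, Fintype.card_fin]

/-- Fiberwise counting. -/
lemma card_le_of_fibers {α β : Type*} [DecidableEq β] (s : Finset α) (t : Finset β)
    (f : α → β) (K : ℕ) (hmem : ∀ x ∈ s, f x ∈ t)
    (hfib : ∀ b ∈ t, (s.filter (fun x => f x = b)).card ≤ K) :
    s.card ≤ t.card * K := by
  rw [Finset.card_eq_sum_card_fiberwise hmem]
  calc ∑ b ∈ t, (s.filter (fun x => f x = b)).card ≤ ∑ _b ∈ t, K :=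
        Finset.sum_le_sum hfib
    _ = t.card * K := by rw [Finset.sum_const, smul_eq_mul]

/-- Oblivious-cache bound: for fixed caches `C₁,...,C_T` of size `s`, the
probability (over uniform `π`) that `π^t(1) ∈ C_t` for all `t = 1,...,T` is at
most `(s/(n−T))^T + 2T³/n`. -/
theorem stmt_8 (n T s : ℕ) (hn : T + 1 ≤ n) (hn0 : 0 < n)
    (C : ℕ → Finset (Fin n)) (hC : ∀ t, (C t).card = s) :
    (((Finset.univ : Finset (Equiv.Perm (Fin n))).filter
      (fun π : Equiv.Perm (Fin n) => ∀ t ∈ Finset.Icc 1 T, (π ^ t) (⟨0, hn0⟩ : Fin n) ∈ C t)).card : ℝ)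
      / (Nat.factorial n : ℝ)
      ≤ ((s : ℝ) / ((n : ℝ) - T)) ^ T + 2 * (T : ℝ) ^ 3 / n := by
  classical
  set z0 : Fin n := ⟨0, hn0⟩ with hz0
  set E : Finset (Equiv.Perm (Fin n)) := Finset.univ.filter
    (fun π => ∀ t ∈ Finset.Icc 1 T, (π ^ t) z0 ∈ C t) with hE
  set G : Finset (Equiv.Perm (Fin n)) := Finset.univ.filter
    (fun π => (∀ t ∈ Finset.Icc 1 T, (π ^ t) z0 ∈ C t) ∧
      Function.Injective (fun j : Fin (T+1) => (π ^ (j : ℕ)) z0)) with hG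
  set B : Finset (Equiv.Perm (Fin n)) := Finset.univ.filter
    (fun π => ∃ ℓ ∈ Finset.Icc 1 T, (π ^ ℓ) z0 = z0 ∧
      Function.Injective (fun j : Fin ℓ => (π ^ (j : ℕ)) z0)) with hB
  have hstep : ∀ (π : Equiv.Perm (Fin n)) (k : ℕ), (π ^ (k+1)) z0 = π ((π ^ k) z0) := by
    intro π k
    rw [_root_.pow_succ']
    exact Equiv.Perm.mul_apply _ _ _
  have hEGB : E ⊆ G ∪ B := by
    intro π hπ
    rw [hE, Finset.mem_filter] at hπ
    rw [Finset.mem_union, hG, hB, Finset.mem_filter, Finset.mem_filter]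
    by_cases hinj : Function.Injective (fun j : Fin (T+1) => (π ^ (j : ℕ)) z0)
    · exact Or.inl ⟨Finset.mem_univ _, hπ.2, hinj⟩
    · right
      refine ⟨Finset.mem_univ _, ?_⟩
      have key : ∀ u v : ℕ, u < v → (π ^ u) z0 = (π ^ v) z0 → (π ^ (v - u)) z0 = z0 := by
        intro u v huv heq
        have h2 : (π ^ u) ((π ^ (v - u)) z0) = (π ^ u) z0 := by
          rw [← Equiv.Perm.mul_apply, ← pow_add, Nat.add_sub_cancel' (le_of_lt huv)]
          exact heq.symm
        exact (π ^ u).injective h2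
      have hex' : ∃ k, (0 < k ∧ k ≤ T) ∧ (π ^ k) z0 = z0 := by
        rw [Function.not_injective_iff] at hinj
        obtain ⟨i, j, hij, hne⟩ := hinj
        have hi := i.isLt
        have hj := j.isLt
        have hne' : (i : ℕ) ≠ (j : ℕ) := fun h => hne (Fin.ext h)
        rcases Nat.lt_or_ge (i : ℕ) (j : ℕ) with h | h
        · exact ⟨(j:ℕ) - i, ⟨by omega, by omega⟩, key i j h hij⟩
        · exact ⟨(i:ℕ) - j, ⟨by omega, by omega⟩, key j i (by omega) hij.symm⟩
      have hex : ∃ k, 0 < k ∧ (π ^ k) z0 = z0 :=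
        ⟨hex'.choose, hex'.choose_spec.1.1, hex'.choose_spec.2⟩
      have hℓspec := Nat.find_spec hex
      have hℓle : Nat.find hex ≤ T :=
        le_trans (Nat.find_min' hex ⟨hex'.choose_spec.1.1, hex'.choose_spec.2⟩)
          hex'.choose_spec.1.2
      refine ⟨Nat.find hex, Finset.mem_Icc.mpr ⟨hℓspec.1, hℓle⟩, hℓspec.2, ?_⟩
      intro u v huv
      by_contra hne
      have hne' : (u : ℕ) ≠ (v : ℕ) := fun h => hne (Fin.ext h)
      have hcontra : ∀ a b : Fin (Nat.find hex), (a : ℕ) < (b : ℕ) →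
          (π ^ (a:ℕ)) z0 = (π ^ (b:ℕ)) z0 → False := by
        intro a b hab heq
        have hret := key a b hab heq
        have hlt : (b:ℕ) - a < Nat.find hex := by
          have := b.isLt; omega
        exact Nat.find_min hex hlt ⟨by omega, hret⟩
      rcases Nat.lt_or_ge (u : ℕ) (v : ℕ) with h | h
      · exact hcontra u v h huv
      · exact hcontra v u (by omega) huv.symm
  -- bound on G
  have hGcard : G.card ≤ s ^ T * (n - T)! := by
    have hmain := card_le_of_fibers G
      ((Fintype.piFinset (fun i : Fin T => C ((i:ℕ)+1))).filter
        (fun w => Function.Injective (Fin.cons z0 w : Fin (T+1) → Fin n)))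
      (fun π => fun i : Fin T => (π ^ ((i:ℕ)+1)) z0) ((n - T)!) ?_ ?_
    · refine hmain.trans ?_
      apply Nat.mul_le_mul_right
      calc ((Fintype.piFinset (fun i : Fin T => C ((i:ℕ)+1))).filter _).card
          ≤ (Fintype.piFinset (fun i : Fin T => C ((i:ℕ)+1))).card :=
            Finset.card_le_card (Finset.filter_subset _ _)
        _ = ∏ i : Fin T, (C ((i:ℕ)+1)).card := Fintype.card_piFinset _
        _ = s ^ T := by simp [hC]
    · intro π hπ
      rw [hG, Finset.mem_filter] at hπ
      rw [Finset.mem_filter, Fintype.mem_piFinset]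
      constructor
      · intro i
        exact hπ.2.1 ((i:ℕ)+1) (Finset.mem_Icc.mpr ⟨by omega, by have := i.isLt; omega⟩)
      · have hcons : (Fin.cons z0 (fun i : Fin T => (π ^ ((i:ℕ)+1)) z0) : Fin (T+1) → Fin n)
            = fun j : Fin (T+1) => (π ^ (j:ℕ)) z0 := by
          funext j
          refine Fin.cases ?_ ?_ j
          · simp
          · intro i
            simp [Fin.cons_succ]
        rw [hcons]
        exact hπ.2.2
    · intro w hw
      rw [Finset.mem_filter] at hw
      have hcons_inj : Function.Injective (Fin.cons z0 w : Fin (T+1) → Fin n) := hw.2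
      have ha : Function.Injective
          (fun i : Fin T => (Fin.cons z0 w : Fin (T+1) → Fin n) i.castSucc) :=
        fun i j h => Fin.castSucc_injective T (hcons_inj h)
      calc (G.filter (fun π => (fun i : Fin T => (π ^ ((i:ℕ)+1)) z0) = w)).card
          ≤ ((Finset.univ : Finset (Equiv.Perm (Fin n))).filter
              (fun π => ∀ i : Fin T,
                π ((Fin.cons z0 w : Fin (T+1) → Fin n) i.castSucc) = w i)).card := by
            apply Finset.card_le_card
            intro π hπ
            rw [Finset.mem_filter] at hπ ⊢
            refine ⟨Finset.mem_univ _, ?_⟩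
            have hfw := hπ.2
            intro i
            have htrace : ∀ j : Fin (T+1), (Fin.cons z0 w : Fin (T+1) → Fin n) j
                = (π ^ (j:ℕ)) z0 := by
              intro j
              refine Fin.cases ?_ ?_ j
              · simp
              · intro k
                have hk := congrFun hfw k
                simpa [Fin.cons_succ] using hk.symm
            rw [htrace i.castSucc]
            rw [Fin.coe_castSucc, ← hstep π (i:ℕ)]
            exact congrFun hfw i
        _ ≤ (n - T)! := perm_constraint_card_le n T _ _ ha
  -- bound on B
  have hBcard : B.card ≤ T * (n - 1)! := by
    have hBsub : B ⊆ (Finset.Icc 1 T).biUnion (fun ℓ => Finset.univ.filter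
        (fun π : Equiv.Perm (Fin n) => (π ^ ℓ) z0 = z0 ∧
          Function.Injective (fun j : Fin ℓ => (π ^ (j : ℕ)) z0))) := by
      intro π hπ
      rw [hB, Finset.mem_filter] at hπ
      obtain ⟨-, ℓ, hℓ, h1, h2⟩ := hπ
      exact Finset.mem_biUnion.mpr ⟨ℓ, hℓ, Finset.mem_filter.mpr ⟨Finset.mem_univ _, h1, h2⟩⟩
    have hD : ∀ ℓ ∈ Finset.Icc 1 T, (Finset.univ.filter
        (fun π : Equiv.Perm (Fin n) => (π ^ ℓ) z0 = z0 ∧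
          Function.Injective (fun j : Fin ℓ => (π ^ (j : ℕ)) z0))).card ≤ (n - 1)! := by
      intro ℓ hℓ
      rw [Finset.mem_Icc] at hℓ
      obtain ⟨m, rfl⟩ : ∃ m, ℓ = m + 1 := ⟨ℓ - 1, by omega⟩
      set D := Finset.univ.filter
        (fun π : Equiv.Perm (Fin n) => (π ^ (m+1)) z0 = z0 ∧
          Function.Injective (fun j : Fin (m+1) => (π ^ (j : ℕ)) z0)) with hDdef
      have hmemD : ∀ π ∈ D, (fun i : Fin m => (π ^ ((i:ℕ)+1)) z0) ∈
          ((Finset.univ : Finset (Fin m → Fin n)).filter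
            (fun w => Function.Injective w ∧ ∀ i, w i ≠ z0)) := by
        intro π hπ
        rw [hDdef, Finset.mem_filter] at hπ
        obtain ⟨-, h1, h2⟩ := hπ
        rw [Finset.mem_filter]
        refine ⟨Finset.mem_univ _, ?_, ?_⟩
        · intro i j hij
          have h4 : (⟨(i:ℕ)+1, by omega⟩ : Fin (m+1)) = ⟨(j:ℕ)+1, by omega⟩ := by
            apply h2
            simpa using hij
          have h5 : (i:ℕ)+1 = (j:ℕ)+1 := congrArg Fin.val h4
          exact Fin.ext (by omega)
        · intro i hi
          have h4 : (⟨(i:ℕ)+1, by omega⟩ : Fin (m+1)) = ⟨0, by omega⟩ := by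
            apply h2
            simpa using hi
          have h5 : (i:ℕ)+1 = 0 := congrArg Fin.val h4
          omega
      have hfibD : ∀ w ∈ ((Finset.univ : Finset (Fin m → Fin n)).filter
            (fun w => Function.Injective w ∧ ∀ i, w i ≠ z0)),
          (D.filter (fun π => (fun i : Fin m => (π ^ ((i:ℕ)+1)) z0) = w)).card
            ≤ (n - (m+1))! := by
        intro w hw
        rw [Finset.mem_filter] at hw
        obtain ⟨-, hwinj, hwz⟩ := hw
        have hcons_inj : Function.Injective (Fin.cons z0 w : Fin (m+1) → Fin n) := by
          rw [Fin.cons_injective_iff]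
          refine ⟨?_, hwinj⟩
          rintro ⟨i, hi⟩
          exact hwz i hi
        calc (D.filter (fun π => (fun i : Fin m => (π ^ ((i:ℕ)+1)) z0) = w)).card
            ≤ ((Finset.univ : Finset (Equiv.Perm (Fin n))).filter
                (fun π => ∀ i : Fin (m+1),
                  π ((Fin.cons z0 w : Fin (m+1) → Fin n) i) =
                    (Fin.snoc w z0 : Fin (m+1) → Fin n) i)).card := by
              apply Finset.card_le_card
              intro π hπ
              rw [Finset.mem_filter] at hπ
              obtain ⟨hπD, hfw⟩ := hπ
              rw [hDdef, Finset.mem_filter] at hπD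
              obtain ⟨-, hret, -⟩ := hπD
              rw [Finset.mem_filter]
              refine ⟨Finset.mem_univ _, ?_⟩
              have htrace : ∀ j : Fin (m+1), (Fin.cons z0 w : Fin (m+1) → Fin n) j
                  = (π ^ (j:ℕ)) z0 := by
                intro j
                refine Fin.cases ?_ ?_ j
                · simp
                · intro k
                  have hk := congrFun hfw k
                  simpa [Fin.cons_succ] using hk.symm
              intro i
              rw [htrace i, ← hstep π (i:ℕ)]
              refine Fin.lastCases ?_ ?_ i
              · simp only [Fin.snoc_last, Fin.val_last]
                exact hret
              · intro k
                simp only [Fin.snoc_castSucc, Fin.coe_castSucc]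
                exact congrFun hfw k
          _ ≤ (n - (m+1))! := perm_constraint_card_le n (m+1) _ _ hcons_inj
      have hmain := card_le_of_fibers D
        ((Finset.univ : Finset (Fin m → Fin n)).filter
          (fun w => Function.Injective w ∧ ∀ i, w i ≠ z0))
        (fun π => fun i : Fin m => (π ^ ((i:ℕ)+1)) z0) ((n - (m+1))!) hmemD hfibD
      refine hmain.trans ?_
      calc (((Finset.univ : Finset (Fin m → Fin n)).filter
            (fun w => Function.Injective w ∧ ∀ i, w i ≠ z0)).card) * (n - (m+1))!
          ≤ (n-1).descFactorial m * (n - (m+1))! :=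
            Nat.mul_le_mul_right _ (card_tuples_le n m z0)
        _ = (n - 1)! := by
            clear hmemD hfibD hmain hDdef
            have hmn : m ≤ n - 1 := by omega
            have hfd := Nat.factorial_mul_descFactorial hmn
            have heq : n - 1 - m = n - (m + 1) := by omega
            rw [heq] at hfd
            rw [mul_comm]
            exact hfd
    calc B.card ≤ ((Finset.Icc 1 T).biUnion _).card := Finset.card_le_card hBsub
      _ ≤ ∑ ℓ ∈ Finset.Icc 1 T, (Finset.univ.filter
          (fun π : Equiv.Perm (Fin n) => (π ^ ℓ) z0 = z0 ∧
            Function.Injective (fun j : Fin ℓ => (π ^ (j : ℕ)) z0))).card :=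
          Finset.card_biUnion_le
      _ ≤ ∑ _ℓ ∈ Finset.Icc 1 T, (n-1)! := Finset.sum_le_sum hD
      _ = T * (n-1)! := by rw [Finset.sum_const, Nat.card_Icc]; simp [mul_comm]
  -- combine
  have hEcard : E.card ≤ s ^ T * (n - T)! + T * (n - 1)! :=
    calc E.card ≤ (G ∪ B).card := Finset.card_le_card hEGB
      _ ≤ G.card + B.card := Finset.card_union_le _ _
      _ ≤ s ^ T * (n - T)! + T * (n - 1)! := Nat.add_le_add hGcard hBcard
  -- real arithmetic
  have hnT : T ≤ n := by omega
  have hfacpos : (0:ℝ) < (n)! := by positivity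
  have hnTpos : (0:ℝ) < (n:ℝ) - T := by
    have : (T:ℝ) + 1 ≤ n := by exact_mod_cast hn
    linarith
  have hkey : (n - T) ^ T * (n - T)! ≤ n ! := by
    calc (n - T) ^ T * (n - T)! ≤ n.descFactorial T * (n - T)! := by
          apply Nat.mul_le_mul_right
          calc (n - T)^T ≤ (n + 1 - T)^T := Nat.pow_le_pow_left (by omega) T
            _ ≤ n.descFactorial T := Nat.pow_sub_le_descFactorial n T
      _ = n ! := by
          rw [mul_comm]
          exact Nat.factorial_mul_descFactorial hnT
  have h1 : (E.card : ℝ) ≤ (s:ℝ) ^ T * ((n - T)! : ℝ) + (T:ℝ) * ((n - 1)! : ℝ) := by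
    exact_mod_cast hEcard
  rw [div_le_iff₀ hfacpos]
  have goal1 : (s:ℝ) ^ T * ((n - T)! : ℝ) ≤ ((s:ℝ) / ((n:ℝ) - T)) ^ T * ((n)! : ℝ) := by
    rw [div_pow, div_mul_eq_mul_div, le_div_iff₀ (by positivity)]
    have hcast : ((n:ℝ) - T) ^ T = (((n - T:ℕ)) : ℝ) ^ T := by
      congr 1
      rw [Nat.cast_sub hnT]
    rw [hcast]
    calc (s:ℝ) ^ T * ((n - T)! : ℝ) * (((n - T:ℕ)) : ℝ) ^ T
        = (s:ℝ)^T * ((((n-T:ℕ)):ℝ)^T * ((n-T)! : ℝ)) := by ring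
      _ ≤ (s:ℝ)^T * ((n)! : ℝ) := by
          apply mul_le_mul_of_nonneg_left _ (by positivity)
          exact_mod_cast hkey
  have goal2 : (T:ℝ) * ((n-1)! : ℝ) ≤ 2 * (T:ℝ)^3 / n * ((n)! : ℝ) := by
    have hfac : ((n)! : ℝ) = n * ((n-1)! : ℝ) := by
      exact_mod_cast (Nat.mul_factorial_pred hn0.ne').symm
    have hsimp : 2 * (T:ℝ)^3 / n * ((n:ℝ) * ((n-1)! : ℝ)) = 2 * (T:ℝ)^3 * ((n-1)! : ℝ) := by
      have hne : (n:ℝ) ≠ 0 := by positivity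
      field_simp
    have hT3 : (T:ℝ) ≤ 2 * (T:ℝ)^3 := by
      have hnat : T ≤ 2 * T^3 := by
        rcases Nat.eq_zero_or_pos T with h | h
        · simp [h]
        · calc T = T * 1 * 1 := by ring
            _ ≤ T * T * T := Nat.mul_le_mul (Nat.mul_le_mul le_rfl h) h
            _ = T ^ 3 := by ring
            _ ≤ 2 * T ^ 3 := by omega
      exact_mod_cast hnat
    rw [hfac, hsimp]
    exact mul_le_mul_of_nonneg_right hT3 (by positivity)
  calc (E.card : ℝ) ≤ (s:ℝ) ^ T * ((n - T)! : ℝ) + (T:ℝ) * ((n - 1)! : ℝ) := h1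
    _ ≤ ((s:ℝ) / ((n:ℝ) - T)) ^ T * ((n)! : ℝ) + 2 * (T:ℝ)^3 / n * ((n)! : ℝ) :=
        add_le_add goal1 goal2
    _ = (((s:ℝ) / ((n:ℝ) - T)) ^ T + 2 * (T:ℝ)^3 / n) * ((n)! : ℝ) := by ring
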